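/- Let F : ℕ → ℝ[X] (polynomials in x) satisfy F(0) = 1, F(1) = 4x² + 2x, F(2) = 16x⁴ + 12x³ + 4x², and F(n) = (4x² + 3x)·F(n−1) − (8x³ + 2x²)·F(n−2) + 4x³·F(n−3) for n ≥ 3. Then the generating function identity holds: (1 − ((4x²+3x)t − (8x³+2x²)t² + 4x³t³)) · Σ_{n≥0} F(n) t^n = 1 − x·t as formal power series in t over ℝ[X]. -/

import Mathlib

open Polynomial

theorem stmt_2 (F : ℕ → Polynomial ℝ)
    (h0 : F 0 = 1)
    (h1 : F 1 = 4 * X ^ 2 + 2 * X)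
    (h2 : F 2 = 16 * X ^ 4 + 12 * X ^ 3 + 4 * X ^ 2)
    (hrec : ∀ n, 3 ≤ n → F n = (4 * X ^ 2 + 3 * X) * F (n - 1)
      - (8 * X ^ 3 + 2 * X ^ 2) * F (n - 2) + 4 * X ^ 3 * F (n - 3)) :
    (1 - (PowerSeries.C (4 * X ^ 2 + 3 * X) * PowerSeries.X
        - PowerSeries.C (8 * X ^ 3 + 2 * X ^ 2) * PowerSeries.X ^ 2
        + PowerSeries.C (4 * X ^ 3) * PowerSeries.X ^ 3))
      * PowerSeries.mk (fun n => F n)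
    = 1 - PowerSeries.C X * PowerSeries.X := by
  have key : ∀ (a : Polynomial ℝ) (k n : ℕ) (f : PowerSeries (Polynomial ℝ)),
      (PowerSeries.coeff n) (PowerSeries.C a * PowerSeries.X ^ k * f)
        = if k ≤ n then a * PowerSeries.coeff (n - k) f else 0 := by
    intro a k n f
    rw [mul_assoc, PowerSeries.coeff_C_mul, PowerSeries.coeff_X_pow_mul']
    split <;> simp
  have expand : (1 - (PowerSeries.C (4 * X ^ 2 + 3 * X) * PowerSeries.X
        - PowerSeries.C (8 * X ^ 3 + 2 * X ^ 2) * PowerSeries.X ^ 2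
        + PowerSeries.C (4 * X ^ 3) * PowerSeries.X ^ 3))
      * PowerSeries.mk (fun n => F n)
      = PowerSeries.mk (fun n => F n)
        - PowerSeries.C (4 * X ^ 2 + 3 * X) * PowerSeries.X ^ 1
            * PowerSeries.mk (fun n => F n)
        + PowerSeries.C (8 * X ^ 3 + 2 * X ^ 2) * PowerSeries.X ^ 2
            * PowerSeries.mk (fun n => F n)
        - PowerSeries.C (4 * X ^ 3) * PowerSeries.X ^ 3
            * PowerSeries.mk (fun n => F n) := by ring
  rw [expand]
  refine PowerSeries.ext fun n => ?_
  have crhs : ∀ k : ℕ, (PowerSeries.coeff (R := Polynomial ℝ) k)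
      (1 - PowerSeries.C X * PowerSeries.X)
      = (if k = 0 then 1 else 0) - (if k = 1 then X else 0) := by
    intro k
    rw [map_sub, PowerSeries.coeff_one, PowerSeries.coeff_C_mul, PowerSeries.coeff_X]
    split <;> simp
  simp only [LinearMap.map_sub, LinearMap.map_add, key, PowerSeries.coeff_mk, crhs]
  match n with
  | 0 => norm_num [h0]
  | 1 => norm_num [h0, h1]; ring
  | 2 => norm_num [h0, h1, h2]; ring
  | (m + 3) =>
    have h := hrec (m + 3) (by omega)
    have e1 : m + 3 - 1 = m + 2 := by omega
    have e2 : m + 3 - 2 = m + 1 := by omega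
    have e3 : m + 3 - 3 = m := by omega
    rw [e1, e2, e3] at h
    norm_num
    rw [if_neg (by omega : ¬ m + 3 = 1), e2, h]
    ring
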